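/- arXiv:2001.06266 — 3 statements merged into one kernel-verified Lean document; each statement's English description precedes it below -/
import Mathlib

section
/- Let T be a bounded linear operator on a Banach space X with ‖T‖ ≤ 1, and P a projection with TP = PT. If δ_P(T^{n0}) < 1 for some n0 ∈ ℕ, then ‖T^n(I − P)‖ → 0 as n → ∞. -/
open Filter Topology

noncomputable def dobrushin {X : Type*} [NormedAddCommGroup X] [NormedSpace ℝ X]
    (P A : X →L[ℝ] X) : ℝ :=
  sSup {r : ℝ | ∃ x : X, P x = 0 ∧ x ≠ 0 ∧ r = ‖A x‖ / ‖x‖}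

/- On `ker P` the power `T ^ n0` contracts by the factor `δ = δ_P(T ^ n0) < 1`, and `ker P` is
`T`-invariant and contains the range of `1 - P`; hence `‖T ^ (n0 * q) * (1 - P)‖ ≤ δ ^ q ‖1 - P‖`.
Since `‖T‖ ≤ 1`, the sequence `‖T ^ n * (1 - P)‖` is antitone, so this subsequence bound forces
the whole sequence to zero. -/

theorem Antitone.tendsto_zero_of_le_of_tendsto_zero {a b : ℕ → ℝ} (ha : Antitone a)
    (ha0 : ∀ n, 0 ≤ a n) (g : ℕ → ℕ) (hab : ∀ q, a (g q) ≤ b q)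
    (hb : Tendsto b atTop (𝓝 0)) : Tendsto a atTop (𝓝 0) := by
  have hbdd : BddBelow (Set.range a) := ⟨0, Set.forall_mem_range.2 ha0⟩
  have hinf : ⨅ n, a n = 0 :=
    le_antisymm (ge_of_tendsto' hb fun q => (ciInf_le hbdd (g q)).trans (hab q))
      (le_ciInf ha0)
  simpa [hinf] using tendsto_atTop_ciInf ha hbdd

section Dobrushin

variable {X : Type*} [NormedAddCommGroup X] [NormedSpace ℝ X] (P : X →L[ℝ] X)

theorem dobrushin_nonneg (A : X →L[ℝ] X) : 0 ≤ dobrushin P A :=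
  Real.sSup_nonneg fun _ ⟨_, _, _, hr⟩ => hr ▸ by positivity

theorem norm_apply_le_dobrushin_mul (A : X →L[ℝ] X) {x : X} (hx : P x = 0) :
    ‖A x‖ ≤ dobrushin P A * ‖x‖ := by
  rcases eq_or_ne x 0 with rfl | hx0
  · simp
  have hbdd : BddAbove {r : ℝ | ∃ x : X, P x = 0 ∧ x ≠ 0 ∧ r = ‖A x‖ / ‖x‖} := by
    refine ⟨‖A‖, ?_⟩
    rintro r ⟨y, -, hy0, rfl⟩
    exact div_le_of_le_mul₀ (norm_nonneg _) (norm_nonneg _) (A.le_opNorm y)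
  rw [← div_le_iff₀ (norm_pos_iff.2 hx0)]
  exact le_csSup hbdd ⟨x, hx, hx0, rfl⟩

theorem norm_mul_le_dobrushin_mul {A B : X →L[ℝ] X} (hB : P * B = 0) :
    ‖A * B‖ ≤ dobrushin P A * ‖B‖ := by
  refine ContinuousLinearMap.opNorm_le_bound _
    (mul_nonneg (dobrushin_nonneg P A) (norm_nonneg _)) fun x => ?_
  have hBx : P (B x) = 0 := DFunLike.congr_fun hB x
  calc ‖A (B x)‖ ≤ dobrushin P A * ‖B x‖ := norm_apply_le_dobrushin_mul P A hBx
    _ ≤ dobrushin P A * (‖B‖ * ‖x‖) :=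
      mul_le_mul_of_nonneg_left (B.le_opNorm x) (dobrushin_nonneg P A)
    _ = _ := (mul_assoc _ _ _).symm

theorem norm_pow_mul_sub_le (hP : P * P = P) {A : X →L[ℝ] X} (hA : Commute A P) (q : ℕ) :
    ‖A ^ q * (1 - P)‖ ≤ dobrushin P A ^ q * ‖1 - P‖ := by
  induction q with
  | zero => simp
  | succ q ih =>
    have hker : P * (A ^ q * (1 - P)) = 0 := by
      rw [← mul_assoc, (hA.pow_left q).eq.symm, mul_assoc, mul_sub, mul_one, hP, sub_self,
        mul_zero]
    calc ‖A ^ (q + 1) * (1 - P)‖ = ‖A * (A ^ q * (1 - P))‖ := by rw [pow_succ', mul_assoc]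
      _ ≤ dobrushin P A * ‖A ^ q * (1 - P)‖ := norm_mul_le_dobrushin_mul P hker
      _ ≤ dobrushin P A * (dobrushin P A ^ q * ‖1 - P‖) :=
        mul_le_mul_of_nonneg_left ih (dobrushin_nonneg P A)
      _ = dobrushin P A ^ (q + 1) * ‖1 - P‖ := by ring

end Dobrushin

theorem antitone_norm_pow_mul {E : Type*} [SeminormedRing E] {T : E}
    (hT : ‖T‖ ≤ 1) (B : E) : Antitone fun n : ℕ => ‖T ^ n * B‖ :=
  antitone_nat_of_succ_le fun n =>
    calc ‖T ^ (n + 1) * B‖ = ‖T * (T ^ n * B)‖ := by rw [pow_succ', mul_assoc]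
      _ ≤ ‖T‖ * ‖T ^ n * B‖ := norm_mul_le _ _
      _ ≤ ‖T ^ n * B‖ := mul_le_of_le_one_left (norm_nonneg _) hT

theorem stmt5_general {X : Type*} [NormedAddCommGroup X] [NormedSpace ℝ X]
    (P T : X →L[ℝ] X) (hP : P * P = P) (hT : ‖T‖ ≤ 1) (hcomm : T * P = P * T)
    (n0 : ℕ) (hdelta : dobrushin P (T ^ n0) < 1) :
    Tendsto (fun n : ℕ => ‖T ^ n * (1 - P)‖) atTop (𝓝 0) := by
  have hbound : ∀ q, ‖T ^ (n0 * q) * (1 - P)‖ ≤ dobrushin P (T ^ n0) ^ q * ‖1 - P‖ := fun q => by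
    rw [pow_mul]
    exact norm_pow_mul_sub_le P hP (Commute.pow_left hcomm n0) q
  have hgeom : Tendsto (fun q : ℕ => dobrushin P (T ^ n0) ^ q * ‖1 - P‖) atTop (𝓝 0) := by
    simpa using (tendsto_pow_atTop_nhds_zero_of_lt_one (dobrushin_nonneg P _) hdelta).mul_const
      ‖(1 : X →L[ℝ] X) - P‖
  exact (antitone_norm_pow_mul hT (1 - P)).tendsto_zero_of_le_of_tendsto_zero
    (fun _ => norm_nonneg _) (n0 * ·) hbound hgeom

theorem stmt5 {X : Type*} [NormedAddCommGroup X] [NormedSpace ℝ X] [CompleteSpace X]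
    (P T : X →L[ℝ] X) (hP : P * P = P) (hT : ‖T‖ ≤ 1) (hcomm : T * P = P * T)
    (n0 : ℕ) (hdelta : dobrushin P (T ^ n0) < 1) :
    Tendsto (fun n : ℕ => ‖T ^ n * (1 - P)‖) atTop (𝓝 0) :=
  stmt5_general P T hP hT hcomm n0 hdelta
end

section
/- Let X be a Banach space, T : X → X a linear operator with ‖T‖ ≤ 1 and P a projection with TP = PT = P. Then T is uniformly P-ergodic (‖T^n − P‖ → 0) if and only if there exists n0 ∈ ℕ such that the restriction of T^{n0} to the subspace (I − P)X has operator norm strictly less than 1. -/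
open Filter Topology

theorem stmt10 {X : Type*} [NormedAddCommGroup X] [NormedSpace ℝ X] [CompleteSpace X]
    (P T : X →L[ℝ] X) (hP : P * P = P) (hT : ‖T‖ ≤ 1)
    (hTP : T * P = P) (hPT : P * T = P) :
    Tendsto (fun n : ℕ => ‖T ^ n - P‖) atTop (𝓝 0) ↔
      ∃ n0 : ℕ, ∃ c : ℝ, c < 1 ∧ ∀ x : X, (1 - P) x = x → ‖(T ^ n0) x‖ ≤ c * ‖x‖ := by
  have hTnP : ∀ n : ℕ, T ^ n * P = P := by
    intro n; induction n with
    | zero => simp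
    | succ n ih => rw [pow_succ, mul_assoc, hTP, ih]
  have hPTn : ∀ n : ℕ, P * T ^ n = P := by
    intro n; induction n with
    | zero => simp
    | succ n ih => rw [pow_succ, ← mul_assoc, ih, hPT]
  have hker : ∀ x : X, (1 - P) x = x ↔ P x = 0 := by
    intro x
    simp [ContinuousLinearMap.sub_apply, sub_eq_self]
  constructor
  · intro h
    obtain ⟨n0, hn0⟩ := (h.eventually (gt_mem_nhds one_pos)).exists
    refine ⟨n0, ‖T ^ n0 - P‖, hn0, fun x hx => ?_⟩
    have hPx : P x = 0 := (hker x).1 hx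
    calc ‖(T ^ n0) x‖ = ‖(T ^ n0 - P) x‖ := by
          simp [ContinuousLinearMap.sub_apply, hPx]
      _ ≤ ‖T ^ n0 - P‖ * ‖x‖ := (T ^ n0 - P).le_opNorm x
  · rintro ⟨n0, c, hc, hx⟩
    set c' := max c 0 with hc'def
    have hc'0 : 0 ≤ c' := le_max_right _ _
    have hc'1 : c' < 1 := max_lt hc one_pos
    set m := n0 + 1 with hm
    have hm0 : 0 < m := Nat.succ_pos n0
    have hTr1 : ∀ r : ℕ, ‖T ^ r‖ ≤ 1 := by
      intro r; induction r with
      | zero => rw [pow_zero]; exact ContinuousLinearMap.norm_id_le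
      | succ r ih =>
        calc ‖T ^ (r + 1)‖ = ‖T ^ r * T‖ := by rw [pow_succ]
          _ ≤ ‖T ^ r‖ * ‖T‖ := norm_mul_le _ _
          _ ≤ 1 * 1 := mul_le_mul ih hT (norm_nonneg _) zero_le_one
          _ = 1 := one_mul 1
    have hx' : ∀ x : X, P x = 0 → ‖(T ^ m) x‖ ≤ c' * ‖x‖ := by
      intro x hPx
      have hTx : P (T x) = 0 := by
        calc P (T x) = (P * T) x := rfl
          _ = P x := by rw [hPT]
          _ = 0 := hPx
      have h1 : (T ^ m) x = (T ^ n0) (T x) := by rw [hm, pow_succ]; rfl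
      rw [h1]
      calc ‖(T ^ n0) (T x)‖ ≤ c * ‖T x‖ := hx _ ((hker _).2 hTx)
        _ ≤ c' * ‖T x‖ := mul_le_mul_of_nonneg_right (le_max_left _ _) (norm_nonneg _)
        _ ≤ c' * ‖x‖ := by
            apply mul_le_mul_of_nonneg_left _ hc'0
            calc ‖T x‖ ≤ ‖T‖ * ‖x‖ := T.le_opNorm x
              _ ≤ 1 * ‖x‖ := mul_le_mul_of_nonneg_right hT (norm_nonneg _)
              _ = ‖x‖ := one_mul _
    have hiter : ∀ (k : ℕ) (x : X), P x = 0 → ‖(T ^ (m * k)) x‖ ≤ c' ^ k * ‖x‖ := by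
      intro k
      induction k with
      | zero => intro x _; simp
      | succ k ih =>
        intro x hPx
        have hPy : P ((T ^ m) x) = 0 := by
          calc P ((T ^ m) x) = (P * T ^ m) x := rfl
            _ = P x := by rw [hPTn]
            _ = 0 := hPx
        have h1 : (T ^ (m * (k + 1))) x = (T ^ (m * k)) ((T ^ m) x) := by
          rw [mul_add, mul_one, pow_add]; rfl
        rw [h1]
        calc ‖(T ^ (m * k)) ((T ^ m) x)‖ ≤ c' ^ k * ‖(T ^ m) x‖ := ih _ hPy
          _ ≤ c' ^ k * (c' * ‖x‖) :=
              mul_le_mul_of_nonneg_left (hx' x hPx) (pow_nonneg hc'0 k)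
          _ = c' ^ (k + 1) * ‖x‖ := by ring
    have hbound : ∀ n : ℕ, ‖T ^ n - P‖ ≤ (1 + ‖P‖) * c' ^ (n / m) := by
      intro n
      have key : T ^ n - P = T ^ n * (1 - P) := by
        rw [mul_sub, mul_one, hTnP]
      apply ContinuousLinearMap.opNorm_le_bound
      · positivity
      intro x
      set y := (1 - P) x with hy
      have hPy : P y = 0 := by
        calc P y = (P * (1 - P)) x := rfl
          _ = (0 : X →L[ℝ] X) x := by rw [mul_sub, mul_one, hP, sub_self]
          _ = 0 := rfl
      have hyn : ‖y‖ ≤ (1 + ‖P‖) * ‖x‖ := by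
        calc ‖y‖ = ‖x - P x‖ := by
              rw [hy]; simp [ContinuousLinearMap.sub_apply]
          _ ≤ ‖x‖ + ‖P x‖ := norm_sub_le _ _
          _ ≤ ‖x‖ + ‖P‖ * ‖x‖ := by
              exact add_le_add_right (P.le_opNorm x) _
          _ = (1 + ‖P‖) * ‖x‖ := by ring
      have hsplit : (T ^ n - P) x = (T ^ (n % m)) ((T ^ (m * (n / m))) y) := by
        have hd : T ^ n = T ^ (n % m) * T ^ (m * (n / m)) := by
          conv_lhs => rw [← Nat.mod_add_div n m]
          rw [pow_add]
        rw [key, hd]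
        rfl
      rw [hsplit]
      calc ‖(T ^ (n % m)) ((T ^ (m * (n / m))) y)‖
          ≤ ‖T ^ (n % m)‖ * ‖(T ^ (m * (n / m))) y‖ := ContinuousLinearMap.le_opNorm _ _
        _ ≤ 1 * ‖(T ^ (m * (n / m))) y‖ :=
            mul_le_mul_of_nonneg_right (hTr1 _) (norm_nonneg _)
        _ = ‖(T ^ (m * (n / m))) y‖ := one_mul _
        _ ≤ c' ^ (n / m) * ‖y‖ := hiter _ _ hPy
        _ ≤ c' ^ (n / m) * ((1 + ‖P‖) * ‖x‖) :=
            mul_le_mul_of_nonneg_left hyn (pow_nonneg hc'0 _)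
        _ = (1 + ‖P‖) * c' ^ (n / m) * ‖x‖ := by ring
    have hdiv : Tendsto (fun n : ℕ => n / m) atTop atTop :=
      (Filter.map_div_atTop_eq_nat m hm0).le
    have hgeo : Tendsto (fun n : ℕ => (1 + ‖P‖) * c' ^ (n / m)) atTop (𝓝 0) := by
      have h1 := (tendsto_pow_atTop_nhds_zero_of_lt_one hc'0 hc'1).comp hdiv
      simpa using h1.const_mul (1 + ‖P‖)
    exact squeeze_zero (fun n => norm_nonneg _) hbound hgeo
end

section
/- Let T, S be linear contractions on a Banach space X and let P be a projection on X such that PT = TP, PS = SP and TP = SP = P. Suppose δ_P(T^m) < 1 for some m ∈ ℕ. Then for all x, z with Px = Pz and ‖x‖, ‖z‖ ≤ 1 and all n ∈ ℕ: ‖T^n x − S^n z‖ ≤ δ_P(T^m)^{⌊n/m⌋}(‖x − z‖ + max_{0<i<m}‖T^i − S^i‖) + ((1 − δ_P(T^m)^{⌊n/m⌋})/(1 − δ_P(T^m)))·‖T^m − S^m‖. -/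
open Filter Topology

theorem stmt17 {X : Type*} [NormedAddCommGroup X] [NormedSpace ℝ X] [CompleteSpace X]
    (P T S : X →L[ℝ] X) (hP : P * P = P)
    (hT : ‖T‖ ≤ 1) (hS : ‖S‖ ≤ 1)
    (hTP : T * P = P * T) (hSP : S * P = P * S)
    (hTPP : T * P = P) (hSPP : S * P = P)
    (m : ℕ) (hm : 1 ≤ m) (hdelta : dobrushin P (T ^ m) < 1) :
    ∀ x z : X, P x = P z → ‖x‖ ≤ 1 → ‖z‖ ≤ 1 → ∀ n : ℕ,
      ‖(T ^ n) x - (S ^ n) z‖ ≤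
        dobrushin P (T ^ m) ^ (n / m) *
            (‖x - z‖ + sSup {r : ℝ | ∃ i : ℕ, 0 < i ∧ i < m ∧ r = ‖T ^ i - S ^ i‖}) +
          (1 - dobrushin P (T ^ m) ^ (n / m)) / (1 - dobrushin P (T ^ m)) *
            ‖T ^ m - S ^ m‖ := by
  set δ := dobrushin P (T ^ m) with hδdef
  set C := sSup {r : ℝ | ∃ i : ℕ, 0 < i ∧ i < m ∧ r = ‖T ^ i - S ^ i‖} with hCdef
  set D := ‖T ^ m - S ^ m‖ with hDdef
  -- norms of powers
  have hTn : ∀ i : ℕ, ‖T ^ i‖ ≤ 1 := by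
    intro i
    rcases Nat.eq_zero_or_pos i with h | h
    · simp [h]; exact ContinuousLinearMap.norm_id_le
    · calc ‖T ^ i‖ ≤ ‖T‖ ^ i := norm_pow_le' T h
        _ ≤ 1 := pow_le_one₀ (norm_nonneg _) hT
  have hSn : ∀ i : ℕ, ‖S ^ i‖ ≤ 1 := by
    intro i
    rcases Nat.eq_zero_or_pos i with h | h
    · simp [h]; exact ContinuousLinearMap.norm_id_le
    · calc ‖S ^ i‖ ≤ ‖S‖ ^ i := norm_pow_le' S h
        _ ≤ 1 := pow_le_one₀ (norm_nonneg _) hS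
  -- bddAbove of dobrushin set
  have hbdd : BddAbove {r : ℝ | ∃ x : X, P x = 0 ∧ x ≠ 0 ∧ r = ‖(T ^ m) x‖ / ‖x‖} := by
    refine ⟨‖T ^ m‖, ?_⟩
    rintro r ⟨x, hx0, hxne, rfl⟩
    rw [div_le_iff₀ (norm_pos_iff.mpr hxne)]
    exact (T ^ m).le_opNorm x
  have hδ0 : 0 ≤ δ := by
    apply Real.sSup_nonneg
    rintro r ⟨x, hx0, hxne, rfl⟩
    positivity
  have h1δ : 0 < 1 - δ := by linarith
  -- key contraction estimate
  have hkey : ∀ w : X, P w = 0 → ‖(T ^ m) w‖ ≤ δ * ‖w‖ := by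
    intro w hw
    rcases eq_or_ne w 0 with rfl | hne
    · simp
    · have hle : ‖(T ^ m) w‖ / ‖w‖ ≤ δ :=
        le_csSup hbdd ⟨w, hw, hne, rfl⟩
      have hwpos : (0:ℝ) < ‖w‖ := norm_pos_iff.mpr hne
      rw [div_le_iff₀ hwpos] at hle
      linarith
  -- C bounds
  have hCbdd : BddAbove {r : ℝ | ∃ i : ℕ, 0 < i ∧ i < m ∧ r = ‖T ^ i - S ^ i‖} := by
    refine ⟨2, ?_⟩
    rintro r ⟨i, hi0, him, rfl⟩
    calc ‖T ^ i - S ^ i‖ ≤ ‖T ^ i‖ + ‖S ^ i‖ := norm_sub_le _ _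
      _ ≤ 2 := by linarith [hTn i, hSn i]
  have hC0 : 0 ≤ C := by
    apply Real.sSup_nonneg
    rintro r ⟨i, hi0, him, rfl⟩
    positivity
  have hCle : ∀ i : ℕ, 0 < i → i < m → ‖T ^ i - S ^ i‖ ≤ C := fun i h1 h2 =>
    le_csSup hCbdd ⟨i, h1, h2, rfl⟩
  have hD0 : 0 ≤ D := norm_nonneg _
  -- P commutes / absorbs powers
  have hPTk : ∀ k : ℕ, P * T ^ k = P := by
    intro k
    induction k with
    | zero => simp
    | succ k ih =>
      rw [pow_succ, ← mul_assoc, ih, ← hTP, hTPP]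
  have hPSk : ∀ k : ℕ, P * S ^ k = P := by
    intro k
    induction k with
    | zero => simp
    | succ k ih =>
      rw [pow_succ, ← mul_assoc, ih, ← hSP, hSPP]
  -- main claim by strong induction on n
  have main : ∀ n : ℕ, ∀ x z : X, P x = P z → ‖x‖ ≤ 1 → ‖z‖ ≤ 1 →
      ‖(T ^ n) x - (S ^ n) z‖ ≤
        δ ^ (n / m) * (‖x - z‖ + C) + (1 - δ ^ (n / m)) / (1 - δ) * D := by
    intro n
    induction n using Nat.strong_induction_on with
    | _ n ih =>
      intro x z hxz hx hz
      rcases lt_or_ge n m with hnm | hnm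
      · -- base case n < m
        rw [Nat.div_eq_of_lt hnm]
        simp only [pow_zero, one_mul, sub_self, zero_div, zero_mul, add_zero]
        have heq : (T ^ n) x - (S ^ n) z = (T ^ n) (x - z) + (T ^ n - S ^ n) z := by
          simp [map_sub]
        rw [heq]
        have h1 : ‖(T ^ n) (x - z)‖ ≤ ‖x - z‖ := by
          calc ‖(T ^ n) (x - z)‖ ≤ ‖T ^ n‖ * ‖x - z‖ := (T ^ n).le_opNorm _
            _ ≤ 1 * ‖x - z‖ := mul_le_mul_of_nonneg_right (hTn n) (norm_nonneg _)
            _ = ‖x - z‖ := one_mul _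
        have h2 : ‖(T ^ n - S ^ n) z‖ ≤ C := by
          rcases Nat.eq_zero_or_pos n with rfl | hn0
          · simp [hC0]
          · calc ‖(T ^ n - S ^ n) z‖ ≤ ‖T ^ n - S ^ n‖ * ‖z‖ := (T ^ n - S ^ n).le_opNorm _
              _ ≤ C * 1 := mul_le_mul (hCle n hn0 hnm) hz (norm_nonneg _) hC0
              _ = C := mul_one _
        calc ‖(T ^ n) (x - z) + (T ^ n - S ^ n) z‖
            ≤ ‖(T ^ n) (x - z)‖ + ‖(T ^ n - S ^ n) z‖ := norm_add_le _ _
          _ ≤ ‖x - z‖ + C := add_le_add h1 h2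
      · -- inductive step n ≥ m
        have hnsub : n - m < n := Nat.sub_lt (lt_of_lt_of_le (by omega) hnm) (by omega)
        set u := (T ^ (n - m)) x with hu
        set v := (S ^ (n - m)) z with hv
        have hPuv : P u = P v := by
          have h1 : P u = P x := by
            have := congrArg (fun A => A x) (hPTk (n - m))
            simpa only [ContinuousLinearMap.mul_apply] using this
          have h2 : P v = P z := by
            have := congrArg (fun A => A z) (hPSk (n - m))
            simpa only [ContinuousLinearMap.mul_apply] using this
          rw [h1, h2, hxz]
        have hPuv0 : P (u - v) = 0 := by rw [map_sub, hPuv, sub_self]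
        have hvnorm : ‖v‖ ≤ 1 := by
          calc ‖v‖ ≤ ‖S ^ (n - m)‖ * ‖z‖ := (S ^ (n - m)).le_opNorm _
            _ ≤ 1 * 1 := mul_le_mul (hSn _) hz (norm_nonneg _) zero_le_one
            _ = 1 := one_mul _
        have heq : (T ^ n) x - (S ^ n) z = (T ^ m) (u - v) + (T ^ m - S ^ m) v := by
          have h1 : (T ^ n) x = (T ^ m) u := by
            rw [hu, ← ContinuousLinearMap.mul_apply, ← pow_add]
            congr 2
            omega
          have h2 : (S ^ n) z = (S ^ m) v := by
            rw [hv, ← ContinuousLinearMap.mul_apply, ← pow_add]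
            congr 2
            omega
          rw [h1, h2]
          simp [map_sub]
        have hbound : ‖(T ^ n) x - (S ^ n) z‖ ≤ δ * ‖u - v‖ + D := by
          rw [heq]
          calc ‖(T ^ m) (u - v) + (T ^ m - S ^ m) v‖
              ≤ ‖(T ^ m) (u - v)‖ + ‖(T ^ m - S ^ m) v‖ := norm_add_le _ _
            _ ≤ δ * ‖u - v‖ + D := by
                refine add_le_add (hkey _ hPuv0) ?_
                calc ‖(T ^ m - S ^ m) v‖ ≤ ‖T ^ m - S ^ m‖ * ‖v‖ :=
                      (T ^ m - S ^ m).le_opNorm _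
                  _ ≤ D * 1 := mul_le_mul le_rfl hvnorm (norm_nonneg _) hD0
                  _ = D := mul_one _
        -- IH at n - m with original x z? No: IH is for ‖u - v‖ as ‖T^{n-m} x - S^{n-m} z‖
        have hIH := ih (n - m) hnsub x z hxz hx hz
        have huv : ‖u - v‖ = ‖(T ^ (n - m)) x - (S ^ (n - m)) z‖ := rfl
        set q := (n - m) / m with hq
        have hdiv : n / m = q + 1 := by
          rw [hq]
          rw [Nat.div_eq_sub_div (by omega) hnm]
        rw [hdiv]
        have hδq : 0 ≤ δ ^ q := pow_nonneg hδ0 q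
        have hcalc : δ * (δ ^ q * (‖x - z‖ + C) + (1 - δ ^ q) / (1 - δ) * D) + D =
            δ ^ (q + 1) * (‖x - z‖ + C) + (1 - δ ^ (q + 1)) / (1 - δ) * D := by
          field_simp
          ring
        calc ‖(T ^ n) x - (S ^ n) z‖ ≤ δ * ‖u - v‖ + D := hbound
          _ ≤ δ * (δ ^ q * (‖x - z‖ + C) + (1 - δ ^ q) / (1 - δ) * D) + D := by
              have := mul_le_mul_of_nonneg_left (huv ▸ hIH) hδ0
              linarith
          _ = δ ^ (q + 1) * (‖x - z‖ + C) + (1 - δ ^ (q + 1)) / (1 - δ) * D := hcalc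
  intro x z hxz hx hz n
  exact main n x z hxz hx hz
end
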